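/- Let M = M₁ ⊕ M₂ ⊕ … be a graded algebra (not necessarily associative) over a field. If J is a nonzero ideal of M, let J_gr be the ideal generated by the nonzero homogeneous components of maximal degree of elements of J. Then J_gr is a nonzero graded ideal of M; moreover, if every finitely generated subalgebra of J is nilpotent (J is locally nilpotent), then J_gr is locally nilpotent. -/

import Mathlib

/-- `ProdLen mul s n x` : x is a product (with some bracketing) of n elements of s. -/
inductive ProdLen {M : Type*} (mul : M → M → M) (s : Set M) : ℕ → M → Prop
  | base : ∀ a ∈ s, ProdLen mul s 1 a
  | comb : ∀ {m n : ℕ} {a b : M}, ProdLen mul s m a → ProdLen mul s n b →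
      ProdLen mul s (m + n) (mul a b)

/-- A subset S is locally nilpotent if every finitely generated subalgebra of S is
    nilpotent: for every finite s ⊆ S all sufficiently long products of elements of s
    vanish. -/
def LocNilp {F M : Type*} [Field F] [AddCommGroup M] [Module F M]
    (mul : M →ₗ[F] M →ₗ[F] M) (S : Set M) : Prop :=
  ∀ s : Finset M, ↑s ⊆ S → ∃ n : ℕ, ∀ k ≥ n, ∀ a : M,
    ProdLen (fun x y => mul x y) ↑s k a → a = 0

section Aux

variable {F M : Type*} [Field F] [AddCommGroup M] [Module F M]

/-- The submodule of elements of degree `< d`. -/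
def lowS (𝒜 : ℕ → Submodule F M) (d : ℕ) : Submodule F M := ⨆ i ∈ Finset.range d, 𝒜 i

theorem mem_lowS {𝒜 : ℕ → Submodule F M} {i d : ℕ} {a : M} (ha : a ∈ 𝒜 i) (h : i < d) :
    a ∈ lowS 𝒜 d :=
  Submodule.mem_iSup_of_mem i (Submodule.mem_iSup_of_mem (Finset.mem_range.2 h) ha)

theorem lowS_mono {𝒜 : ℕ → Submodule F M} : Monotone (lowS 𝒜) := fun d e hde => by
  refine iSup_le fun i => iSup_le fun hi => ?_
  exact fun a ha => mem_lowS ha (lt_of_lt_of_le (Finset.mem_range.1 hi) hde)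

theorem mul_lowS_lowS {𝒜 : ℕ → Submodule F M} (mul : M →ₗ[F] M →ₗ[F] M)
    (hgraded : ∀ i j : ℕ, ∀ a ∈ 𝒜 i, ∀ b ∈ 𝒜 j, mul a b ∈ 𝒜 (i + j))
    {p q r : ℕ} (hpq : ∀ i j, i < p → j < q → i + j < r) :
    ∀ a ∈ lowS 𝒜 p, ∀ b ∈ lowS 𝒜 q, mul a b ∈ lowS 𝒜 r := by
  have step1 : ∀ i, i < p → ∀ a ∈ 𝒜 i, ∀ b ∈ lowS 𝒜 q, mul a b ∈ lowS 𝒜 r := by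
    intro i hi a ha b hb
    refine (show lowS 𝒜 q ≤ Submodule.comap (mul a) (lowS 𝒜 r) from ?_) hb
    refine iSup_le fun j => iSup_le fun hj b' hb' => ?_
    exact mem_lowS (hgraded i j a ha b' hb') (hpq i j hi (Finset.mem_range.1 hj))
  intro a ha b hb
  refine (show lowS 𝒜 p ≤ Submodule.comap (mul.flip b) (lowS 𝒜 r) from ?_) ha
  refine iSup_le fun i => iSup_le fun hi a' ha' => ?_
  exact step1 i (Finset.mem_range.1 hi) a' ha' b hb

/-- A bilinear map sends spans into any submodule containing the images of generators. -/
theorem bilin_span (mul : M →ₗ[F] M →ₗ[F] M) (P Q : Set M) (R : Submodule F M)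
    (h : ∀ p ∈ P, ∀ q ∈ Q, mul p q ∈ R) :
    ∀ a ∈ Submodule.span F P, ∀ b ∈ Submodule.span F Q, mul a b ∈ R := by
  intro a ha b hb
  have h1 : ∀ p ∈ P, mul p b ∈ R := fun p hp =>
    (show Submodule.span F Q ≤ Submodule.comap (mul p) R from
      Submodule.span_le.2 fun q hq => h p hp q hq) hb
  exact (show Submodule.span F P ≤ Submodule.comap (mul.flip b) R from
    Submodule.span_le.2 fun p hp => h1 p hp) ha

theorem prodlen_span (mul : M →ₗ[F] M →ₗ[F] M) (s T : Set M)
    (hsT : s ⊆ ↑(Submodule.span F T)) :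
    ∀ {k : ℕ} {a : M}, ProdLen (fun x y => mul x y) s k a →
      a ∈ Submodule.span F {c | ProdLen (fun x y => mul x y) T k c} := by
  intro k a h
  induction h with
  | base v hv =>
      exact Submodule.span_mono (fun c hc => ProdLen.base c hc) (hsT hv)
  | comb ha hb iha ihb =>
      exact bilin_span mul _ _ _
        (fun p hp q hq => Submodule.subset_span
          (show ProdLen (fun x y => mul x y) T _ _ from ProdLen.comb hp hq)) _ iha _ ihb

end Aux

/-- Let M = M₁ ⊕ M₂ ⊕ … be a graded (nonassociative) algebra over a field and J a
    nonzero ideal. Let J_gr be the ideal generated by the nonzero top homogeneous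
    components of elements of J. Then J_gr is a nonzero graded ideal, and if J is
    locally nilpotent then so is J_gr. -/
theorem graded_top_ideal (F M : Type*) [Field F] [AddCommGroup M] [Module F M]
    (mul : M →ₗ[F] M →ₗ[F] M)
    (𝒜 : ℕ → Submodule F M) (h0 : 𝒜 0 = ⊥)
    (hinternal : DirectSum.IsInternal 𝒜)
    (hgraded : ∀ i j : ℕ, ∀ a ∈ 𝒜 i, ∀ b ∈ 𝒜 j, mul a b ∈ 𝒜 (i + j))
    (J : Submodule F M) (hJ : J ≠ ⊥)
    (hJideal : ∀ a ∈ J, ∀ m : M, mul a m ∈ J ∧ mul m a ∈ J) :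
    let topSet : Set M :=
      {v | ∃ d : ℕ, v ∈ 𝒜 d ∧ v ≠ 0 ∧ ∃ x ∈ J, x - v ∈ ⨆ i ∈ Finset.range d, 𝒜 i}
    let Jgr : Submodule F M :=
      sInf {P : Submodule F M | topSet ⊆ ↑P ∧ ∀ a ∈ P, ∀ m : M, mul a m ∈ P ∧ mul m a ∈ P}
    Jgr ≠ ⊥ ∧
    (∀ a ∈ Jgr, ∀ m : M, mul a m ∈ Jgr ∧ mul m a ∈ Jgr) ∧
    (Jgr = ⨆ i : ℕ, (Jgr ⊓ 𝒜 i)) ∧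
    (LocNilp mul ↑J → LocNilp mul ↑Jgr) := by
  classical
  intro topSet Jgr
  -- basic facts
  have htop_eq : ∀ v : M, v ∈ topSet ↔
      ∃ d : ℕ, v ∈ 𝒜 d ∧ v ≠ 0 ∧ ∃ x ∈ J, x - v ∈ lowS 𝒜 d := fun v => Iff.rfl
  have hdisj : ∀ (d : ℕ) (c : M), c ∈ 𝒜 d → c ∈ lowS 𝒜 d → c = 0 := by
    intro d c hc hc'
    have hind := hinternal.submodule_iSupIndep
    have hle : lowS 𝒜 d ≤ ⨆ (j) (_ : j ≠ d), 𝒜 j := by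
      refine iSup_le fun i => iSup_le fun hi => ?_
      exact le_iSup_of_le i (le_iSup_of_le (Nat.ne_of_lt (Finset.mem_range.1 hi)) le_rfl)
    exact (Submodule.disjoint_def.1 (hind d)) c hc (hle hc')
  have hsup_top : (⨆ i : ℕ, 𝒜 i) = ⊤ := hinternal.submodule_iSup_eq_top
  -- every element lies in some lowS
  have hlowN : ∀ x : M, ∃ N, x ∈ lowS 𝒜 N := by
    intro x
    have hx : x ∈ ⨆ N, lowS 𝒜 N := by
      have : (⊤ : Submodule F M) ≤ ⨆ N, lowS 𝒜 N := by
        rw [← hsup_top]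
        exact iSup_le fun i => le_iSup_of_le (i + 1) fun a ha => mem_lowS ha (Nat.lt_succ_self i)
      exact this Submodule.mem_top
    exact (Submodule.mem_iSup_of_directed _ lowS_mono.directed_le).1 hx
  -- homogeneous products with top elements are top elements (or zero)
  have hmul_top_hom : ∀ v ∈ topSet, ∀ j : ℕ, ∀ m ∈ 𝒜 j,
      (mul v m = 0 ∨ mul v m ∈ topSet) ∧ (mul m v = 0 ∨ mul m v ∈ topSet) := by
    intro v hv j m hm
    obtain ⟨d, hvd, hvne, x, hxJ, hxv⟩ := hv
    constructor
    · by_cases hz : mul v m = 0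
      · exact Or.inl hz
      refine Or.inr ⟨d + j, hgraded d j v hvd m hm, hz, mul x m, (hJideal x hxJ m).1, ?_⟩
      have heq : mul x m - mul v m = mul (x - v) m := by
        simp only [map_sub, LinearMap.sub_apply]
      show mul x m - mul v m ∈ lowS 𝒜 (d + j)
      rw [heq]
      exact mul_lowS_lowS (p := d) (q := j + 1) (r := d + j) mul hgraded
        (fun i j' hi hj' => by omega) _ hxv _ (mem_lowS hm (Nat.lt_succ_self j))
    · by_cases hz : mul m v = 0
      · exact Or.inl hz
      refine Or.inr ⟨j + d, hgraded j d m hm v hvd, hz, mul m x, (hJideal x hxJ m).2, ?_⟩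
      have heq : mul m x - mul m v = mul m (x - v) := by
        simp only [map_sub]
      show mul m x - mul m v ∈ lowS 𝒜 (j + d)
      rw [heq]
      exact mul_lowS_lowS (p := j + 1) (q := d) (r := j + d) mul hgraded
        (fun i j' hi hj' => by omega) _ (mem_lowS hm (Nat.lt_succ_self j)) _ hxv
  -- the span of topSet is an ideal
  have hspan_ideal : ∀ a ∈ Submodule.span F topSet, ∀ m : M,
      mul a m ∈ Submodule.span F topSet ∧ mul m a ∈ Submodule.span F topSet := by
    have hv_all : ∀ v ∈ topSet, ∀ m : M,
        mul v m ∈ Submodule.span F topSet ∧ mul m v ∈ Submodule.span F topSet := by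
      intro v hv m
      constructor
      · refine (show (⊤ : Submodule F M) ≤
            Submodule.comap (mul v) (Submodule.span F topSet) from ?_) Submodule.mem_top
        rw [← hsup_top]
        refine iSup_le fun j m' hm' => ?_
        rcases (hmul_top_hom v hv j m' hm').1 with h | h
        · simp only [Submodule.mem_comap, h]; exact Submodule.zero_mem _
        · exact Submodule.subset_span h
      · refine (show (⊤ : Submodule F M) ≤
            Submodule.comap (mul.flip v) (Submodule.span F topSet) from ?_) Submodule.mem_top
        rw [← hsup_top]
        refine iSup_le fun j m' hm' => ?_
        rcases (hmul_top_hom v hv j m' hm').2 with h | h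
        · simp only [Submodule.mem_comap, LinearMap.flip_apply, h]; exact Submodule.zero_mem _
        · exact Submodule.subset_span h
    intro a ha m
    constructor
    · exact (show Submodule.span F topSet ≤
        Submodule.comap (mul.flip m) (Submodule.span F topSet) from
          Submodule.span_le.2 fun v hv => (hv_all v hv m).1) ha
    · exact (show Submodule.span F topSet ≤
        Submodule.comap (mul m) (Submodule.span F topSet) from
          Submodule.span_le.2 fun v hv => (hv_all v hv m).2) ha
  have htop_sub_Jgr : topSet ⊆ ↑Jgr := fun v hv =>
    Submodule.mem_sInf.2 fun P hP => hP.1 hv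
  have hJgr_span : Jgr = Submodule.span F topSet := by
    apply le_antisymm
    · exact sInf_le ⟨Submodule.subset_span, hspan_ideal⟩
    · exact Submodule.span_le.2 htop_sub_Jgr
  -- part 2 : ideal
  have part2 : ∀ a ∈ Jgr, ∀ m : M, mul a m ∈ Jgr ∧ mul m a ∈ Jgr := by
    intro a ha m
    constructor
    · exact Submodule.mem_sInf.2 fun P hP => (hP.2 a (Submodule.mem_sInf.1 ha P hP) m).1
    · exact Submodule.mem_sInf.2 fun P hP => (hP.2 a (Submodule.mem_sInf.1 ha P hP) m).2
  -- part 1 : nonzero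
  have part1 : Jgr ≠ ⊥ := by
    obtain ⟨x, hxJ, hxne⟩ := Submodule.exists_mem_ne_zero_of_ne_bot hJ
    obtain ⟨N, hN⟩ := hlowN x
    have key : ∀ N : ℕ, ∀ x ∈ J, x ≠ 0 → x ∈ lowS 𝒜 N → ∃ v, v ∈ topSet ∧ v ≠ 0 := by
      intro N
      induction N with
      | zero =>
          intro x hxJ hxne hx
          exfalso
          apply hxne
          have : lowS 𝒜 0 = ⊥ := by simp [lowS]
          simpa [this] using hx
      | succ N ih =>
          intro x hxJ hxne hx
          have hsplit : lowS 𝒜 (N + 1) = lowS 𝒜 N ⊔ 𝒜 N := by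
            apply le_antisymm
            · refine iSup_le fun i => iSup_le fun hi => ?_
              rcases Nat.lt_succ_iff_lt_or_eq.1 (Finset.mem_range.1 hi) with h | rfl
              · exact le_trans (fun a ha => mem_lowS ha h) le_sup_left
              · exact le_sup_right
            · exact sup_le (lowS_mono (Nat.le_succ N))
                (fun a ha => mem_lowS ha (Nat.lt_succ_self N))
          rw [hsplit] at hx
          obtain ⟨y, hy, v, hv, hyv⟩ := Submodule.mem_sup.1 hx
          by_cases hvz : v = 0
          · exact ih x hxJ hxne (by rw [← hyv, hvz, add_zero]; exact hy)
          · refine ⟨v, ⟨N, hv, hvz, x, hxJ, ?_⟩, hvz⟩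
            show x - v ∈ lowS 𝒜 N
            rw [← hyv]; simpa using hy
    obtain ⟨v, hvtop, hvne⟩ := key N x hxJ hxne hN
    exact fun h => hvne (by simpa [h] using htop_sub_Jgr hvtop)
  -- part 3 : graded
  have part3 : Jgr = ⨆ i : ℕ, (Jgr ⊓ 𝒜 i) := by
    apply le_antisymm
    · refine sInf_le ⟨?_, ?_⟩
      · intro v hv
        obtain ⟨d, hvd, -, -⟩ := id hv
        exact le_iSup (fun i => Jgr ⊓ 𝒜 i) d ⟨htop_sub_Jgr hv, hvd⟩
      · have hhom : ∀ i : ℕ, ∀ a ∈ Jgr ⊓ 𝒜 i, ∀ m : M,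
            mul a m ∈ ⨆ i : ℕ, (Jgr ⊓ 𝒜 i) ∧ mul m a ∈ ⨆ i : ℕ, (Jgr ⊓ 𝒜 i) := by
          intro i a ⟨haJ, hai⟩ m
          constructor
          · refine (show (⊤ : Submodule F M) ≤
                Submodule.comap (mul a) (⨆ i : ℕ, (Jgr ⊓ 𝒜 i)) from ?_) Submodule.mem_top
            rw [← hsup_top]
            refine iSup_le fun j m' hm' => ?_
            exact le_iSup (fun i => Jgr ⊓ 𝒜 i) (i + j)
              ⟨(part2 a haJ m').1, hgraded i j a hai m' hm'⟩
          · refine (show (⊤ : Submodule F M) ≤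
                Submodule.comap (mul.flip a) (⨆ i : ℕ, (Jgr ⊓ 𝒜 i)) from ?_) Submodule.mem_top
            rw [← hsup_top]
            refine iSup_le fun j m' hm' => ?_
            exact le_iSup (fun i => Jgr ⊓ 𝒜 i) (j + i)
              ⟨(part2 a haJ m').2, hgraded j i m' hm' a hai⟩
        intro a ha m
        constructor
        · exact (show (⨆ i : ℕ, (Jgr ⊓ 𝒜 i)) ≤
            Submodule.comap (mul.flip m) (⨆ i : ℕ, (Jgr ⊓ 𝒜 i)) from
              iSup_le fun i a' ha' => (hhom i a' ha' m).1) ha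
        · exact (show (⨆ i : ℕ, (Jgr ⊓ 𝒜 i)) ≤
            Submodule.comap (mul m) (⨆ i : ℕ, (Jgr ⊓ 𝒜 i)) from
              iSup_le fun i a' ha' => (hhom i a' ha' m).2) ha
    · exact iSup_le fun i => inf_le_left
  refine ⟨part1, part2, part3, ?_⟩
  -- part 4 : local nilpotency
  intro hLN s hs
  rw [hJgr_span] at hs
  -- find a finite subset T of topSet with s ⊆ span T
  have hT : ∃ T : Finset M, ↑T ⊆ topSet ∧ ∀ a ∈ s, a ∈ Submodule.span F (↑T : Set M) := by
    classical
    induction s using Finset.induction_on with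
    | empty => exact ⟨∅, by simp, by simp⟩
    | @insert a s' ha ih =>
        obtain ⟨T, hT1, hT2⟩ := ih (fun x hx => hs (Finset.mem_insert_of_mem hx))
        obtain ⟨T', hT'1, hT'2⟩ :=
          Submodule.mem_span_finite_of_mem_span (hs (Finset.mem_insert_self a s'))
        refine ⟨T ∪ T', by simp [Finset.coe_union]; exact ⟨hT1, hT'1⟩, ?_⟩
        intro b hb
        rcases Finset.mem_insert.1 hb with rfl | hb
        · exact Submodule.span_mono (by simp [Finset.coe_union]) hT'2
        · exact Submodule.span_mono (by simp [Finset.coe_union]) (hT2 b hb)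
  obtain ⟨T, hTtop, hsT⟩ := hT
  -- choose witnesses for elements of T
  choose! dg hdg hne wx hwxJ hwx using fun v (hv : v ∈ topSet) => (htop_eq v).1 hv
  set X : Finset M := T.image wx with hXdef
  have hXJ : (↑X : Set M) ⊆ ↑J := by
    intro x hx
    obtain ⟨v, hv, rfl⟩ := Finset.mem_image.1 (by simpa [hXdef] using hx)
    exact hwxJ v (hTtop hv)
  obtain ⟨n, hn⟩ := hLN X hXJ
  refine ⟨n, fun k hk a ha => ?_⟩
  -- key homogeneity lemma
  have key : ∀ {k : ℕ} {c : M}, ProdLen (fun x y => mul x y) (↑T) k c →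
      c = 0 ∨ ∃ d, c ∈ 𝒜 d ∧ ∃ x, ProdLen (fun x y => mul x y) (↑X) k x ∧
        x - c ∈ lowS 𝒜 d := by
    intro k c h
    induction h with
    | base v hv =>
        right
        have hvt := hTtop hv
        exact ⟨dg v, hdg v hvt, wx v,
          ProdLen.base _ (by simp [hXdef]; exact ⟨v, hv, rfl⟩), hwx v hvt⟩
    | comb hpa hpb iha ihb =>
        rename_i m' n' a' b'
        rcases iha with rfl | ⟨d, hcd, x, hx, hxc⟩
        · left; simp
        rcases ihb with rfl | ⟨e, hce, y, hy, hyc⟩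
        · left; simp
        by_cases hz : mul a' b' = 0
        · exact Or.inl hz
        right
        refine ⟨d + e, hgraded d e a' hcd b' hce, mul x y, ProdLen.comb hx hy, ?_⟩
        have heq : mul x y - mul a' b' = mul x (y - b') + mul (x - a') b' := by
          simp only [map_sub, LinearMap.sub_apply]
          abel
        show mul x y - mul a' b' ∈ lowS 𝒜 (d + e)
        rw [heq]
        apply Submodule.add_mem
        · have hx' : x ∈ lowS 𝒜 (d + 1) := by
            have : x = (x - a') + a' := by abel
            rw [this]
            exact Submodule.add_mem _ (lowS_mono (Nat.le_succ d) hxc)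
              (mem_lowS hcd (Nat.lt_succ_self d))
          exact mul_lowS_lowS (p := d + 1) (q := e) (r := d + e) mul hgraded
            (fun i j hi hj => by omega) _ hx' _ hyc
        · exact mul_lowS_lowS (p := d) (q := e + 1) (r := d + e) mul hgraded
            (fun i j hi hj => by omega) _ hxc _ (mem_lowS hce (Nat.lt_succ_self e))
  have zeroed : ∀ c : M, ProdLen (fun x y => mul x y) (↑T) k c → c = 0 := by
    intro c hc
    rcases key hc with h | ⟨d, hcd, x, hx, hxc⟩
    · exact h
    · have hx0 : x = 0 := hn k hk x hx
      rw [hx0, zero_sub] at hxc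
      exact hdisj d c hcd (by simpa using Submodule.neg_mem _ hxc)
  have ha' := prodlen_span mul (↑s) (↑T) (fun x hx => hsT x hx) ha
  have : Submodule.span F {c | ProdLen (fun x y => mul x y) (↑T : Set M) k c} ≤ ⊥ := by
    refine Submodule.span_le.2 fun c hc => ?_
    simp only [Submodule.bot_coe, Set.mem_singleton_iff]
    exact zeroed c hc
  simpa using this ha'
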